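/- Let p > 3 and c be primes with 16·c < 3·p. Let a, b, a' be integers with 0 < a, −a < b ≤ a ≤ a', gcd(a,b,a') = 1, b² − 4·a·a' = −16·c·p, a ≡ 3 (mod 4), and c not dividing a. Let x, y be coprime integers with x² + a·y² = 4·c. Then (2b)² − 4·a·(4·(a' − p·y²)) = −16·p·x², the integer 4·(a' − p·y²) is positive, and gcd(a, 2b, 4·(a' − p·y²)) = 1; that is, (a, 2b, 4(a' − py²)) is a positive definite primitive integral binary quadratic form of discriminant −16·p·x². -/

import Mathlib

/-- From a reduced primitive form `(a,b,a')` of discriminant `−16cp` with `a ≡ 3 (mod 4)`,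
`c ∤ a`, and a coprime solution of `x² + a·y² = 4c`, one obtains the positive definite
primitive form `(a, 2b, 4(a' − p·y²))` of discriminant `−16·p·x²`. -/
theorem derived_form_of_rep_four_c (p c : ℕ) (hp : p.Prime) (hp3 : 3 < p) (hc : c.Prime)
    (hsize : 16 * c < 3 * p) (a b a' : ℤ) (ha : 0 < a) (hba : -a < b) (hab : b ≤ a)
    (haa' : a ≤ a') (hprim : Int.gcd a (Int.gcd b a') = 1)
    (hdisc : b ^ 2 - 4 * a * a' = -(16 * (c : ℤ) * (p : ℤ)))
    (ha4 : a % 4 = 3) (hca : ¬ ((c : ℤ) ∣ a))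
    (x y : ℤ) (hxy : Int.gcd x y = 1) (hrep : x ^ 2 + a * y ^ 2 = 4 * (c : ℤ)) :
    (2 * b) ^ 2 - 4 * a * (4 * (a' - (p : ℤ) * y ^ 2)) = -(16 * (p : ℤ) * x ^ 2) ∧
    0 < 4 * (a' - (p : ℤ) * y ^ 2) ∧
    Int.gcd a (Int.gcd (2 * b) (4 * (a' - (p : ℤ) * y ^ 2))) = 1 := by
  have hc2 : 2 ≤ c := hc.two_le
  have hcZ : (2 : ℤ) ≤ (c : ℤ) := by exact_mod_cast hc2
  have hpZ : (0 : ℤ) < (p : ℤ) := by exact_mod_cast hp.pos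
  have hsizeZ : (16 : ℤ) * c < 3 * p := by exact_mod_cast hsize
  -- y ≠ 0
  have hy0 : y ≠ 0 := by
    rintro rfl
    simp only [Int.gcd_zero_right] at hxy
    have hx1 : x = 1 ∨ x = -1 := Int.natAbs_eq_iff.1 (by simpa using hxy) |>.imp
      (by simp) (by simp)
    have : x ^ 2 = 1 := by rcases hx1 with rfl | rfl <;> norm_num
    rw [this] at hrep
    omega
  -- x ≠ 0
  have hx0 : x ≠ 0 := by
    rintro rfl
    simp only [Int.gcd_zero_left] at hxy
    have hy1 : y = 1 ∨ y = -1 := Int.natAbs_eq_iff.1 (by simpa using hxy) |>.imp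
      (by simp) (by simp)
    have : y ^ 2 = 1 := by rcases hy1 with rfl | rfl <;> norm_num
    rw [this] at hrep
    omega
  have hx1 : (1 : ℤ) ≤ x ^ 2 := by
    have h0 : (0 : ℤ) < x ^ 2 := by positivity
    linarith [Int.add_one_le_of_lt h0]
  have hy1 : (1 : ℤ) ≤ y ^ 2 := by
    have h0 : (0 : ℤ) < y ^ 2 := by positivity
    linarith [Int.add_one_le_of_lt h0]
  have hap : a < (p : ℤ) := by
    nlinarith [mul_le_mul_of_nonneg_left hy1 ha.le]
  refine ⟨by linear_combination 4 * hdisc + 16 * (p : ℤ) * hrep, ?_, ?_⟩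
  · -- positivity of the last coefficient
    have heq : a * (4 * (a' - (p : ℤ) * y ^ 2)) = b ^ 2 + 4 * (p : ℤ) * x ^ 2 := by
      linear_combination -hdisc - 4 * (p : ℤ) * hrep
    have key : 0 < a * (4 * (a' - (p : ℤ) * y ^ 2)) := by
      rw [heq]
      nlinarith [sq_nonneg b, mul_le_mul_of_nonneg_left hx1 hpZ.le]
    rcases mul_pos_iff.mp key with ⟨_, h⟩ | ⟨h, _⟩
    · exact h
    · linarith
  · -- primitivity
    by_contra hne
    obtain ⟨q, hq, hqd⟩ := Nat.exists_prime_and_dvd hne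
    have hqp : Prime (q : ℤ) := Nat.prime_iff_prime_int.mp hq
    have hdZ : ((Int.gcd a (Int.gcd (2 * b) (4 * (a' - (p : ℤ) * y ^ 2)))) : ℤ) ∣ a :=
      Int.gcd_dvd_left _ _
    have hdZ2 : ((Int.gcd a (Int.gcd (2 * b) (4 * (a' - (p : ℤ) * y ^ 2)))) : ℤ) ∣
        Int.gcd (2 * b) (4 * (a' - (p : ℤ) * y ^ 2)) := Int.gcd_dvd_right _ _
    have hqdZ : (q : ℤ) ∣ (Int.gcd a (Int.gcd (2 * b) (4 * (a' - (p : ℤ) * y ^ 2))) : ℤ) :=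
      Int.natCast_dvd_natCast.mpr hqd
    have hqa : (q : ℤ) ∣ a := hqdZ.trans hdZ
    have hq2b : (q : ℤ) ∣ 2 * b := hqdZ.trans (hdZ2.trans (Int.gcd_dvd_left _ _))
    have hq4t : (q : ℤ) ∣ 4 * (a' - (p : ℤ) * y ^ 2) := hqdZ.trans (hdZ2.trans (Int.gcd_dvd_right _ _))
    have hq2 : ¬ ((q : ℤ) ∣ 2) := by
      intro h
      have h2 : q ∣ 2 := by exact_mod_cast h
      have : q = 2 := by
        have := Nat.le_of_dvd (by norm_num) h2
        have := hq.two_le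
        omega
      subst this
      have h2a : (2 : ℤ) ∣ a := by exact_mod_cast hqa
      omega
    have hqb : (q : ℤ) ∣ b := (hqp.dvd_mul.mp hq2b).resolve_left hq2
    have hqt : (q : ℤ) ∣ (a' - (p : ℤ) * y ^ 2) := by
      rcases hqp.dvd_mul.mp hq4t with h | h
      · exact absurd (hqp.dvd_of_dvd_pow (show (q:ℤ) ∣ 2 ^ 2 by norm_num at h ⊢; exact h)) hq2
      · exact h
    have hqcp : (q : ℤ) ∣ (c : ℤ) * (p : ℤ) := by
      have h1 : (q : ℤ) ∣ b ^ 2 - 4 * a * a' := by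
        have hb2 : (q : ℤ) ∣ b ^ 2 := by rw [sq]; exact hqb.mul_right b
        exact hb2.sub ((hqa.mul_left 4).mul_right a')
      rw [hdisc, dvd_neg] at h1
      have h2 : (q : ℤ) ∣ 2 ^ 4 * ((c : ℤ) * (p : ℤ)) := by
        rw [show (2:ℤ) ^ 4 * ((c : ℤ) * (p : ℤ)) = 16 * (c : ℤ) * (p : ℤ) by ring]; exact h1
      rcases hqp.dvd_mul.mp h2 with h | h
      · exact absurd (hqp.dvd_of_dvd_pow h) hq2
      · exact h
    rcases hqp.dvd_mul.mp hqcp with h | h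
    · have hqc : q = c := by
        have : q ∣ c := by exact_mod_cast h
        exact (Nat.prime_dvd_prime_iff_eq hq hc).mp this
      exact hca (hqc ▸ hqa)
    · have hqP : q = p := by
        have : q ∣ p := by exact_mod_cast h
        exact (Nat.prime_dvd_prime_iff_eq hq hp).mp this
      have : (p : ℤ) ≤ a := Int.le_of_dvd ha (hqP ▸ hqa)
      linarith
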